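/- Let m ≥ 3 and k ≥ 0. The number of proper colorings of the signed graph B_m^1 with color set {−k,…,−1,0,1,…,k} equals (2k)^2 · γ_m(2k+1). -/

import Mathlib

/-- Vertices of the book graph `B(m,n)`: `Sum.inl false` is `u`, `Sum.inl true` is `v`,
and `Sum.inr (i, j)` is the vertex `u_{j+1}^{i+1}`. -/
abbrev BookVertex (m n : ℕ) := Bool ⊕ (Fin n × Fin (m - 2))

/-- Adjacency relation of the book graph `B(m,n)`. -/
def bookAdj (m n : ℕ) : BookVertex m n → BookVertex m n → Prop
  | Sum.inl a, Sum.inl b => a ≠ b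
  | Sum.inl false, Sum.inr (_, j) => j.val = 0
  | Sum.inl true, Sum.inr (_, j) => j.val = m - 3
  | Sum.inr (_, j), Sum.inl false => j.val = 0
  | Sum.inr (_, j), Sum.inl true => j.val = m - 3
  | Sum.inr (i, j), Sum.inr (i', j') => i = i' ∧ (j.val + 1 = j'.val ∨ j'.val + 1 = j.val)

/-- The signature `σ_l` of `B(m,n)`: exactly the edges `u u_1^1, …, u u_1^l` are negative. -/
def sigmaL (m n l : ℕ) : BookVertex m n → BookVertex m n → ℤ
  | Sum.inl false, Sum.inr (i, j) => if j.val = 0 ∧ i.val < l then -1 else 1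
  | Sum.inr (i, j), Sum.inl false => if j.val = 0 ∧ i.val < l then -1 else 1
  | _, _ => 1

/-- The signature of `B^{uv}(m,n)`: exactly the edge `uv` is negative. -/
def sigmaUV (m n : ℕ) : BookVertex m n → BookVertex m n → ℤ
  | Sum.inl _, Sum.inl _ => -1
  | _, _ => 1

/-- `γ_m(x) = ∑_{i=0}^{m-2} (-1)^i (x-1)^{m-2-i}`. -/
def gammaP (m : ℕ) (x : ℤ) : ℤ := ∑ i ∈ Finset.range (m - 1), (-1) ^ i * (x - 1) ^ (m - 2 - i)

/-! ### Auxiliary machinery for counting proper colorings. -/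

/-- The number of walks of length `ℓ` from `a` to `b` in the complete graph on `S`
(the starting vertex `a` need not lie in `S`). -/
def walkW (S : Finset ℤ) : ℕ → ℤ → ℤ → ℤ
  | 0, a, b => if a = b then 1 else 0
  | (ℓ+1), a, b => ∑ c ∈ S.erase a, walkW S ℓ c b

lemma walkW_sum (S : Finset ℤ) (ℓ : ℕ) (b : ℤ) (hb : b ∈ S) :
    ∑ a ∈ S, walkW S ℓ a b = ((S.card : ℤ) - 1) ^ ℓ := by
  induction ℓ with
  | zero => simp [walkW, hb]
  | succ ℓ ih =>
    have : ∀ a ∈ S, walkW S (ℓ+1) a b = (∑ c ∈ S, walkW S ℓ c b) - walkW S ℓ a b := by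
      intro a ha
      rw [show walkW S (ℓ+1) a b = ∑ c ∈ S.erase a, walkW S ℓ c b from rfl,
        Finset.sum_erase_eq_sub ha]
    rw [Finset.sum_congr rfl this, Finset.sum_sub_distrib, ih, Finset.sum_const,
      nsmul_eq_mul]
    ring

lemma walkW_eq (S : Finset ℤ) (ℓ : ℕ) (a b : ℤ) (ha : a ∈ S) (hb : b ∈ S) :
    (S.card : ℤ) * walkW S ℓ a b =
      ((S.card:ℤ) - 1)^ℓ + (-1)^ℓ * ((S.card:ℤ) * (if a = b then 1 else 0) - 1) := by
  induction ℓ with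
  | zero => simp [walkW]
  | succ ℓ ih =>
    have h1 : walkW S (ℓ+1) a b = ((S.card : ℤ) - 1) ^ ℓ - walkW S ℓ a b := by
      rw [show walkW S (ℓ+1) a b = ∑ c ∈ S.erase a, walkW S ℓ c b from rfl,
        Finset.sum_erase_eq_sub ha, walkW_sum S ℓ b hb]
    rw [h1, mul_sub, ih]
    ring

/-- Proper colorings of the path `a - x_0 - x_1 - ⋯ - x_{ℓ-1} - b` with interior colors
(and the color `b`) taken from `S`, the endpoint colors `a, b` being fixed. -/
def wSet (S : Finset ℤ) (ℓ : ℕ) (a b : ℤ) : Finset (Fin ℓ → ℤ) :=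
  (Fintype.piFinset fun _ : Fin ℓ => S).filter
    fun p => List.IsChain (· ≠ ·) (a :: (List.ofFn p ++ [b]))

lemma wSet_card (S : Finset ℤ) (ℓ : ℕ) (b : ℤ) (hb : b ∈ S) :
    ∀ a, ((wSet S ℓ a b).card : ℤ) = walkW S (ℓ+1) a b := by
  induction ℓ with
  | zero =>
    intro a
    have h1 : walkW S 1 a b = ∑ c ∈ S.erase a, if c = b then (1:ℤ) else 0 := rfl
    rw [h1, Finset.sum_ite_eq' (S.erase a) b (fun _ => (1:ℤ))]
    unfold wSet
    by_cases h : a = b <;>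
      simp [List.ofFn_zero, Finset.filter_eq_self, Finset.filter_eq_empty_iff, h, hb,
        fun p : Fin 0 → ℤ => (funext (fun i => i.elim0) : p = Fin.elim0), eq_comm,
        Finset.mem_erase, ne_comm]
    exact fun hba => h hba.symm
  | succ ℓ ih =>
    intro a
    have key : (wSet S (ℓ+1) a b).card = ((S.erase a).sigma fun c => wSet S ℓ c b).card := by
      refine Finset.card_bij' (fun p _ => (⟨p 0, Fin.tail p⟩ : Σ _ : ℤ, Fin ℓ → ℤ))
        (fun x _ => Fin.cons x.1 x.2) ?hi ?hj ?left ?right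
      case hi =>
        intro p hp
        rw [wSet, Finset.mem_filter, Fintype.mem_piFinset] at hp
        obtain ⟨hp1, hp2⟩ := hp
        rw [List.ofFn_succ, List.cons_append, List.isChain_cons_cons] at hp2
        rw [Finset.mem_sigma, Finset.mem_erase]
        refine ⟨⟨hp2.1.symm, hp1 0⟩, ?_⟩
        rw [wSet, Finset.mem_filter, Fintype.mem_piFinset]
        exact ⟨fun i => hp1 i.succ, hp2.2⟩
      case hj =>
        rintro ⟨c, q⟩ hx
        rw [Finset.mem_sigma, Finset.mem_erase] at hx
        obtain ⟨⟨hca, hcS⟩, hq⟩ := hx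
        rw [wSet, Finset.mem_filter, Fintype.mem_piFinset] at hq ⊢
        constructor
        · intro i
          refine Fin.cases ?_ ?_ i
          · simpa using hcS
          · intro j; simpa using hq.1 j
        · rw [List.ofFn_succ, List.cons_append, List.isChain_cons_cons]
          refine ⟨by simpa using hca.symm, ?_⟩
          simpa using hq.2
      case left => intro p _; exact Fin.cons_self_tail p
      case right => rintro ⟨c, q⟩ _; simp
    rw [key, Finset.card_sigma, Nat.cast_sum]
    rw [show walkW S (ℓ+1+1) a b = ∑ c ∈ S.erase a, walkW S (ℓ+1) c b from rfl]
    exact Finset.sum_congr rfl fun c _ => ih c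

lemma chain_iff (ℓ : ℕ) (hℓ : 0 < ℓ) (a b : ℤ) (p : Fin ℓ → ℤ) :
    List.IsChain (· ≠ ·) (a :: (List.ofFn p ++ [b])) ↔
      ((∀ j : Fin ℓ, j.val = 0 → a ≠ p j) ∧ (∀ j : Fin ℓ, j.val = ℓ - 1 → p j ≠ b) ∧
       (∀ j j' : Fin ℓ, j.val + 1 = j'.val → p j ≠ p j')) := by
  set L := a :: (List.ofFn p ++ [b]) with hL
  have hlen : L.length = ℓ + 2 := by simp [hL]
  have g0 : ∀ (h : 0 < L.length), L.get ⟨0, h⟩ = a := fun _ => rfl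
  have g1 : ∀ i (h : i < ℓ) (h' : i + 1 < L.length), L.get ⟨i + 1, h'⟩ = p ⟨i, h⟩ := by
    intro i h h'
    simp only [hL, List.get_eq_getElem, List.getElem_cons_succ]
    rw [List.getElem_append_left (by simpa using h)]
    simp
  have g2 : ∀ (h : ℓ + 1 < L.length), L.get ⟨ℓ + 1, h⟩ = b := by
    intro h
    simp only [hL, List.get_eq_getElem, List.getElem_cons_succ]
    rw [List.getElem_append_right (by simp)]
    simp
  have gcast : ∀ (i i' : ℕ) (h : i < L.length) (h' : i' < L.length), i = i' →
      L.get ⟨i, h⟩ = L.get ⟨i', h'⟩ := by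
    intro i i' h h' e
    subst e
    rfl
  rw [List.isChain_iff_getElem]
  show (∀ i (h : i + 1 < L.length), L.get ⟨i, by omega⟩ ≠ L.get ⟨i+1, h⟩) ↔ _
  constructor
  · intro H
    refine ⟨?_, ?_, ?_⟩
    · intro j hj
      have e : j = ⟨0, hℓ⟩ := Fin.ext hj
      rw [e]
      have := H 0 (by omega)
      rwa [g0, g1 0 hℓ] at this
    · intro j hj
      have e : j = ⟨ℓ - 1, by omega⟩ := Fin.ext hj
      rw [e]
      have := H (ℓ - 1 + 1) (by omega)
      rw [g1 (ℓ - 1) (by omega)] at this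
      have e2 : L.get ⟨ℓ - 1 + 1 + 1, by omega⟩ = b :=
        (gcast (ℓ - 1 + 1 + 1) (ℓ + 1) (by omega) (by omega) (by omega)).trans (g2 (by omega))
      rwa [e2] at this
    · intro j j' hjj
      have e : j' = ⟨j.val + 1, hjj ▸ j'.isLt⟩ := Fin.ext hjj.symm
      rw [e]
      have := H (j.val + 1) (by omega)
      rw [g1 j.val j.isLt, g1 (j.val + 1) (hjj ▸ j'.isLt)] at this
      simpa using this
  · rintro ⟨H1, H2, H3⟩ i h
    rw [hlen] at h
    match i, h with
    | 0, h =>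
      rw [g0, g1 0 hℓ]
      exact H1 ⟨0, hℓ⟩ rfl
    | (i+1), h =>
      rcases Nat.lt_or_ge (i+1) ℓ with h1 | h1
      · rw [g1 i (by omega), g1 (i+1) h1]
        exact H3 ⟨i, by omega⟩ ⟨i+1, h1⟩ rfl
      · have hg : L.get ⟨i + 1 + 1, by omega⟩ = b :=
          (gcast (i + 1 + 1) (ℓ + 1) (by omega) (by omega) (by omega)).trans (g2 (by omega))
        rw [g1 i (by omega), hg]
        exact H2 ⟨i, by omega⟩ (show i = ℓ - 1 by omega)

lemma gamma_key : ∀ m : ℕ, 2 ≤ m → ∀ x : ℤ, x * gammaP m x = (x - 1) ^ (m - 1) + (-1) ^ m := by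
  intro m hm
  induction m, hm using Nat.le_induction with
  | base => intro x; simp [gammaP]
  | succ m hm ih =>
    intro x
    have h1 : gammaP (m + 1) x = (x - 1) ^ (m - 1) - gammaP m x := by
      unfold gammaP
      rw [show m + 1 - 1 = (m - 1) + 1 from by omega, Finset.sum_range_succ']
      have he : ∀ i ∈ Finset.range (m - 1),
          (-1:ℤ) ^ (i + 1) * (x - 1) ^ (m + 1 - 2 - (i + 1)) =
            -((-1) ^ i * (x - 1) ^ (m - 2 - i)) := by
        intro i hi
        rw [show m + 1 - 2 - (i + 1) = m - 2 - i from by omega, pow_succ]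
        ring
      rw [Finset.sum_congr rfl he, Finset.sum_neg_distrib]
      rw [show m + 1 - 2 - 0 = m - 1 from by omega]
      ring
    have hpow : (x - 1) ^ (m - 1) * (x - 1) = (x - 1) ^ m := by
      rw [← pow_succ]; congr 1; omega
    have hsg : (-1 : ℤ) ^ (m + 1) = (-1) ^ m * (-1) := pow_succ _ _
    rw [h1, mul_sub, ih x, show m + 1 - 1 = m from rfl, hsg]
    linear_combination hpow

/-- The number of proper colorings of `B_m^1` (the book graph `B(m,1)` with the edge
`uv` replaced by a digon with one positive and one negative edge) with color set
`{-k, …, -1, 0, 1, …, k}` is `(2k)^2 · γ_m(2k+1)`. -/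
theorem statement7 (m : ℕ) (hm : 3 ≤ m) (k : ℕ) :
    (Nat.card {c : BookVertex m 1 → ℤ //
        (∀ x, |c x| ≤ (k : ℤ)) ∧
        (∀ x y, bookAdj m 1 x y →
          ¬((x = Sum.inl false ∧ y = Sum.inl true) ∨
            (x = Sum.inl true ∧ y = Sum.inl false)) → c x ≠ c y) ∧
        c (Sum.inl false) ≠ c (Sum.inl true) ∧
        c (Sum.inl false) ≠ - c (Sum.inl true)} : ℤ) =
      (2 * (k : ℤ)) ^ 2 * gammaP m (2 * (k : ℤ) + 1) := by
  set S : Finset ℤ := Finset.Icc (-(k:ℤ)) k with hS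
  have hℓ : 0 < m - 2 := by omega
  have hScard : (S.card : ℤ) = 2 * (k:ℤ) + 1 := by
    rw [hS, Int.card_Icc]; omega
  have hmem : ∀ x : ℤ, x ∈ S ↔ |x| ≤ (k:ℤ) := by
    intro x; rw [hS, Finset.mem_Icc, abs_le]
  set T : Finset (Σ _ : ℤ, Σ _ : ℤ, Fin (m-2) → ℤ) :=
    S.sigma fun a => ((S.filter fun b => a ≠ b ∧ a ≠ -b).sigma fun b => wSet S (m-2) a b)
    with hT
  -- the bijection
  have e : {c : BookVertex m 1 → ℤ //
        (∀ x, |c x| ≤ (k : ℤ)) ∧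
        (∀ x y, bookAdj m 1 x y →
          ¬((x = Sum.inl false ∧ y = Sum.inl true) ∨
            (x = Sum.inl true ∧ y = Sum.inl false)) → c x ≠ c y) ∧
        c (Sum.inl false) ≠ c (Sum.inl true) ∧
        c (Sum.inl false) ≠ - c (Sum.inl true)} ≃ {x // x ∈ T} := by
    refine
      { toFun := fun c => ⟨⟨c.1 (Sum.inl false), c.1 (Sum.inl true),
          fun j => c.1 (Sum.inr (0, j))⟩, ?_⟩,
        invFun := fun x => ⟨Sum.elim (fun t : Bool => if t then x.1.2.1 else x.1.1)
          (fun ij => x.1.2.2 ij.2), ?_⟩,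
        left_inv := ?_, right_inv := ?_ }
    · -- forward membership
      obtain ⟨c, h1, h2, h3, h4⟩ := c
      rw [hT, Finset.mem_sigma, Finset.mem_sigma, Finset.mem_filter]
      refine ⟨(hmem _).mpr (h1 _), ⟨(hmem _).mpr (h1 _), h3, h4⟩, ?_⟩
      rw [wSet, Finset.mem_filter, Fintype.mem_piFinset]
      refine ⟨fun j => (hmem _).mpr (h1 _), ?_⟩
      rw [chain_iff (m-2) hℓ]
      refine ⟨?_, ?_, ?_⟩
      · intro j hj
        exact h2 (Sum.inl false) (Sum.inr (0, j)) hj (by simp)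
      · intro j hj
        exact fun hh => h2 (Sum.inr (0, j)) (Sum.inl true) (by
          show j.val = m - 3; omega) (by simp) hh
      · intro j j' hjj
        exact h2 (Sum.inr (0, j)) (Sum.inr (0, j')) ⟨rfl, Or.inl hjj⟩ (by simp)
    · -- backward membership
      obtain ⟨⟨a, b, p⟩, hx⟩ := x
      rw [hT, Finset.mem_sigma, Finset.mem_sigma, Finset.mem_filter] at hx
      obtain ⟨haS, ⟨hbS, hab, hab'⟩, hp⟩ := hx
      rw [wSet, Finset.mem_filter, Fintype.mem_piFinset] at hp
      obtain ⟨hpS, hchain⟩ := hp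
      rw [chain_iff (m-2) hℓ] at hchain
      obtain ⟨H1, H2, H3⟩ := hchain
      refine ⟨?_, ?_, hab, hab'⟩
      · rintro (t | ⟨i, j⟩)
        · cases t
          · exact (hmem _).mp haS
          · exact (hmem _).mp hbS
        · exact (hmem _).mp (hpS j)
      · rintro (t | ⟨i, j⟩) (t' | ⟨i', j'⟩) hadj hexc
        · cases t <;> cases t'
          · exact absurd rfl hadj
          · exact absurd (Or.inl ⟨rfl, rfl⟩) hexc
          · exact absurd (Or.inr ⟨rfl, rfl⟩) hexc
          · exact absurd rfl hadj
        · cases t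
          · exact H1 j' (hadj : j'.val = 0)
          · intro hh
            have h5 : j'.val = m - 3 := hadj
            refine H2 j' ?_ hh.symm
            omega
        · cases t'
          · exact fun hh => H1 j (hadj : j.val = 0) hh.symm
          · have h5 : j.val = m - 3 := hadj
            refine H2 j ?_
            omega
        · obtain ⟨-, hor | hor⟩ := hadj
          · exact H3 j j' hor
          · exact fun hh => H3 j' j hor hh.symm
    · -- left inverse
      rintro ⟨c, hc⟩
      apply Subtype.ext
      funext z
      rcases z with (t | ⟨i, j⟩)
      · cases t <;> rfl
      · show c (Sum.inr (0, j)) = c (Sum.inr (i, j))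
        rw [Subsingleton.elim (0 : Fin 1) i]
    · -- right inverse
      rintro ⟨⟨a, b, p⟩, hx⟩
      rfl
  rw [Nat.card_congr e, Nat.card_eq_finsetCard]
  -- now count T
  have hm2 : 2 ≤ m := by omega
  have hgk := gamma_key m hm2 (2*(k:ℤ)+1)
  have hlam : (2*(k:ℤ)+1) ≠ 0 := by positivity
  have hw : ∀ a ∈ S, ∀ b ∈ (S.filter fun b => a ≠ b ∧ a ≠ -b),
      ((wSet S (m-2) a b).card : ℤ) = gammaP m (2*(k:ℤ)+1) := by
    intro a ha b hb
    rw [Finset.mem_filter] at hb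
    obtain ⟨hbS, hab, -⟩ := hb
    rw [wSet_card S (m-2) b hbS a]
    apply mul_left_cancel₀ hlam
    rw [← hScard, walkW_eq S (m-2+1) a b ha hbS, hScard]
    rw [if_neg hab]
    rw [show m - 2 + 1 = m - 1 from by omega]
    rw [hgk]
    have hsg : (-1:ℤ)^m = (-1)^(m-1) * (-1) := by
      rw [← pow_succ]; congr 1; omega
    rw [hsg]
    ring
  have hcnt : ∀ a ∈ S, ((S.filter fun b => a ≠ b ∧ a ≠ -b).card : ℤ) =
      2*(k:ℤ) - 1 + (if a = 0 then 1 else 0) := by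
    intro a ha
    have hfe : S.filter (fun b => a ≠ b ∧ a ≠ -b) = (S.erase a).erase (-a) := by
      ext b
      simp only [Finset.mem_filter, Finset.mem_erase, hS, Finset.mem_Icc]
      constructor
      · rintro ⟨h1, h2, h3⟩; refine ⟨by omega, by omega, h1⟩
      · rintro ⟨h1, h2, h3⟩; exact ⟨h3, by omega, by omega⟩
    rw [hfe]
    by_cases ha0 : a = 0
    · subst ha0
      rw [neg_zero, Finset.erase_idem, Finset.card_erase_of_mem ha, if_pos rfl]
      have : S.card = 2 * k + 1 := by exact_mod_cast hScard
      rw [this]; push_cast; ring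
    · have hna : -a ∈ S.erase a := by
        rw [Finset.mem_erase, hS, Finset.mem_Icc] at *
        constructor
        · omega
        · obtain ⟨u1, u2⟩ := ha; omega
      rw [Finset.card_erase_of_mem hna, Finset.card_erase_of_mem ha, if_neg ha0]
      have h1 : S.card = 2 * k + 1 := by exact_mod_cast hScard
      have hk : 1 ≤ k := by
        rw [hS, Finset.mem_Icc] at ha
        by_contra hk
        have : (k:ℤ) = 0 := by omega
        omega
      rw [h1]
      push_cast [show 2 * k + 1 - 1 - 1 = 2 * k - 1 from by omega,
        Nat.cast_sub (by omega : 1 ≤ 2 * k)]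
      ring
  have step1 : ∀ a ∈ S,
      ((((S.filter fun b => a ≠ b ∧ a ≠ -b).sigma fun b => wSet S (m-2) a b).card : ℕ) : ℤ)
        = ((S.filter fun b => a ≠ b ∧ a ≠ -b).card : ℤ) * gammaP m (2*(k:ℤ)+1) := by
    intro a ha
    rw [Finset.card_sigma, Nat.cast_sum, Finset.sum_congr rfl (hw a ha),
      Finset.sum_const, nsmul_eq_mul]
  have h0S : (0:ℤ) ∈ S := by rw [hS, Finset.mem_Icc]; constructor <;> omega
  calc ((T.card : ℕ) : ℤ)
      = ∑ a ∈ S, ((((S.filter fun b => a ≠ b ∧ a ≠ -b).sigma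
          fun b => wSet S (m-2) a b).card : ℕ) : ℤ) := by
        rw [hT, Finset.card_sigma, Nat.cast_sum]
    _ = ∑ a ∈ S, ((2*(k:ℤ) - 1 + (if a = 0 then 1 else 0)) * gammaP m (2*(k:ℤ)+1)) := by
        refine Finset.sum_congr rfl fun a ha => ?_
        rw [step1 a ha, hcnt a ha]
    _ = (∑ a ∈ S, (2*(k:ℤ) - 1 + (if a = 0 then 1 else 0))) * gammaP m (2*(k:ℤ)+1) := by
        rw [Finset.sum_mul]
    _ = (2 * (k : ℤ)) ^ 2 * gammaP m (2 * (k : ℤ) + 1) := by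
        rw [Finset.sum_add_distrib, Finset.sum_const,
          Finset.sum_ite_eq' S (0:ℤ) (fun _ => (1:ℤ)), if_pos h0S, nsmul_eq_mul]
        have : (S.card : ℤ) = 2*(k:ℤ)+1 := hScard
        rw [this]
        ring
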